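/- Cyclic non-termination (Theorem 1): for every finite connected simple graph G = (V,E) that contains a cycle and every source node g0 ∈ V, there exists a delay function d satisfying the finite delay property such that flooding under d does not terminate: for every round t there exists a node v ∈ V with M(t,v) = 1. -/

import Mathlib

open scoped Classical




namespace RDAFAux

open SimpleGraph Walk

variable {V : Type*} {G : SimpleGraph V}

lemma support_getElem? {u v : V} (p : G.Walk u v) :
    ∀ i ≤ p.length, p.support[i]? = some (p.getVert i) := by
  induction p with
  | nil =>
    intro i hi
    simp only [Walk.length_nil, Nat.le_zero] at hi
    subst hi
    simp [Walk.getVert]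
  | cons h q ih =>
    intro i hi
    cases i with
    | zero => simp [Walk.getVert]
    | succ n =>
      simp only [Walk.support_cons, List.getElem?_cons_succ, Walk.getVert_cons_succ]
      exact ih n (by simpa using hi)

lemma path_getVert_inj {u v : V} {p : G.Walk u v} (hp : p.IsPath) {i j : ℕ}
    (hi : i ≤ p.length) (hj : j ≤ p.length) (h : p.getVert i = p.getVert j) : i = j := by
  have h1 := support_getElem? p i hi
  have h2 := support_getElem? p j hj
  refine (List.getElem?_inj ?_ hp.support_nodup).mp (h1.trans (h ▸ h2.symm))
  rw [Walk.length_support]; omega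

lemma cycle_getVert_inj {u : V} {p : G.Walk u u} (hp : p.IsCycle) {i j : ℕ}
    (hi : i < p.length) (hj : j < p.length) (h : p.getVert i = p.getVert j) : i = j := by
  have hk3 : 3 ≤ p.length := hp.three_le_length
  have htl : p.support.tail.length = p.length := by
    have h1 := Walk.length_support p
    conv_lhs at h1 => rw [p.support_eq_cons]
    simp only [List.length_cons] at h1
    omega
  have htail : ∀ n, 1 ≤ n → n ≤ p.length → p.support.tail[n-1]? = some (p.getVert n) := by
    intro n h1 h2
    have := support_getElem? p n h2
    rw [p.support_eq_cons] at this
    obtain ⟨n', rfl⟩ : ∃ n', n = n' + 1 := ⟨n - 1, by omega⟩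
    simpa using this
  -- main auxiliary: for i < j < length, getVert i ≠ getVert j
  have key : ∀ a b : ℕ, a < b → b < p.length → p.getVert a ≠ p.getVert b := by
    intro a b hab hb hne
    cases a with
    | zero =>
      have h0 : p.getVert b = p.getVert p.length := by
        rw [Walk.getVert_length]
        exact hne.symm.trans p.getVert_zero
      have e1 := htail b (by omega) (by omega)
      have e2 := htail p.length (by omega) le_rfl
      have := (List.getElem?_inj (i := b - 1) (j := p.length - 1) (l := p.support.tail)
        (by omega) hp.support_nodup).mp (by rw [e1, e2, h0])
      omega
    | succ a' =>
      have e1 := htail (a' + 1) (by omega) (by omega)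
      have e2 := htail b (by omega) (by omega)
      have := (List.getElem?_inj (i := a' + 1 - 1) (j := b - 1) (l := p.support.tail)
        (by omega) hp.support_nodup).mp (by rw [e1, e2, hne])
      omega
  rcases lt_trichotomy i j with h' | h' | h'
  · exact absurd h (key i j h' hj)
  · exact h'
  · exact absurd h.symm (key j i h' hi)

lemma exists_seq (G : SimpleGraph V) (hconn : G.Connected) (hcyc : ¬ G.IsAcyclic) (g0 : V) :
    ∃ w : ℕ → V, w 0 = g0 ∧ (∀ t, G.Adj (w t) (w (t + 1))) ∧ (∀ t, w t ≠ w (t + 2)) := by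
  rw [SimpleGraph.IsAcyclic] at hcyc
  push_neg at hcyc
  obtain ⟨v, c, hc⟩ := hcyc
  obtain ⟨q0⟩ := hconn.preconnected g0 v
  set Q : G.Walk g0 v := (q0.toPath : G.Walk g0 v) with hQdef
  have hq : Q.IsPath := q0.toPath.property
  set m := Q.length with hmdef
  set k := c.length with hkdef
  have hk3 : 3 ≤ k := hc.three_le_length
  have hcinj : ∀ i j, i < k → j < k → c.getVert i = c.getVert j → i = j := by
    intro i j hi hj h; exact cycle_getVert_inj hc hi hj h
  have hck0 : c.getVert k = c.getVert 0 := by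
    rw [c.getVert_length, c.getVert_zero]
  obtain ⟨c', hlen, hinj, hjunc⟩ :
      ∃ c' : G.Walk v v, c'.length = k ∧
        (∀ i j, i < k → j < k → c'.getVert i = c'.getVert j → i = j) ∧
        (1 ≤ m → Q.getVert (m - 1) ≠ c'.getVert 1) := by
    by_cases hcase : 1 ≤ m ∧ Q.getVert (m - 1) = c.getVert 1
    · refine ⟨c.reverse, by simp [hkdef], ?_, ?_⟩
      · intro i j hi hj h
        rw [Walk.getVert_reverse, Walk.getVert_reverse] at h
        rcases Nat.eq_zero_or_pos i with rfl | hi0 <;>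
          rcases Nat.eq_zero_or_pos j with rfl | hj0
        · rfl
        · simp only [Nat.sub_zero, ← hkdef] at h
          rw [hck0] at h
          have := hcinj 0 (k - j) (by omega) (by omega) h
          omega
        · simp only [Nat.sub_zero, ← hkdef] at h
          rw [hck0] at h
          have := hcinj (k - i) 0 (by omega) (by omega) h
          omega
        · have := hcinj (k - i) (k - j) (by omega) (by omega) h
          omega
      · intro hm1 hEq
        rw [Walk.getVert_reverse] at hEq
        rw [hcase.2] at hEq
        have := hcinj 1 (k - 1) (by omega) (by omega) hEq
        omega
    · refine ⟨c, rfl, hcinj, fun hm1 hEq => hcase ⟨hm1, hEq⟩⟩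
  have hk0 : 0 < k := by omega
  have hc'0 : c'.getVert 0 = v := c'.getVert_zero
  have hc'k : c'.getVert k = v := by rw [← hlen, c'.getVert_length]
  set w : ℕ → V := fun t => if t < m then Q.getVert t else c'.getVert ((t - m) % k) with hwdef
  have hwQ : ∀ t ≤ m, w t = Q.getVert t := by
    intro t ht
    show (if t < m then Q.getVert t else c'.getVert ((t - m) % k)) = Q.getVert t
    by_cases h : t < m
    · rw [if_pos h]
    · have : t = m := by omega
      subst this
      rw [if_neg h, Nat.sub_self, Nat.zero_mod, hc'0, Q.getVert_length]
  have hwC : ∀ t, m ≤ t → w t = c'.getVert ((t - m) % k) := by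
    intro t ht
    show (if t < m then Q.getVert t else c'.getVert ((t - m) % k)) = c'.getVert ((t - m) % k)
    rw [if_neg (by omega)]
  have cycAdj : ∀ a : ℕ, G.Adj (c'.getVert (a % k)) (c'.getVert ((a + 1) % k)) := by
    intro a
    have hi : a % k < k := Nat.mod_lt a hk0
    have h1 : (a + 1) % k = (a % k + 1) % k := by
      conv_lhs => rw [Nat.add_mod]
      rw [Nat.mod_eq_of_lt (show 1 < k by omega)]
    by_cases h2 : a % k + 1 < k
    · rw [h1, Nat.mod_eq_of_lt h2]
      exact c'.adj_getVert_succ (by omega)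
    · have h3 : a % k + 1 = k := by omega
      rw [h1, h3, Nat.mod_self, hc'0]
      have ha := c'.adj_getVert_succ (show a % k < c'.length by omega)
      rw [h3, hc'k] at ha
      exact ha
  refine ⟨w, ?_, ?_, ?_⟩
  · -- w 0 = g0
    by_cases h : 0 < m
    · rw [hwQ 0 (by omega), Q.getVert_zero]
    · have hm0 : Q.length = 0 := by omega
      have hgv : g0 = v := Q.eq_of_length_eq_zero hm0
      rw [hwC 0 (by omega), (by omega : 0 - m = 0), Nat.zero_mod, hc'0]
      exact hgv.symm
  · -- adjacency
    intro t
    by_cases h : t < m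
    · rw [hwQ t (by omega), hwQ (t + 1) (by omega)]
      exact Q.adj_getVert_succ h
    · rw [hwC t (by omega), hwC (t + 1) (by omega)]
      have e : t + 1 - m = (t - m) + 1 := by omega
      rw [e]
      exact cycAdj (t - m)
  · -- no backtrack at distance 2
    intro t
    by_cases h1 : t + 2 ≤ m
    · rw [hwQ t (by omega), hwQ (t + 2) h1]
      intro h
      have := path_getVert_inj hq (by omega) (by omega) h
      omega
    · by_cases h2 : t + 1 = m
      · rw [hwQ t (by omega), hwC (t + 2) (by omega)]
        have e : t + 2 - m = 1 := by omega
        rw [e, Nat.mod_eq_of_lt (by omega)]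
        have ht : t = m - 1 := by omega
        rw [ht]
        exact hjunc (by omega)
      · have h3 : m ≤ t := by omega
        rw [hwC t h3, hwC (t + 2) (by omega)]
        intro h
        have e : t + 2 - m = (t - m) + 2 := by omega
        rw [e] at h
        have hmm := hinj _ _ (Nat.mod_lt _ hk0) (Nat.mod_lt _ hk0) h
        have hdvd : k ∣ t - m + 2 - (t - m) := (Nat.modEq_iff_dvd' (by omega)).mp hmm
        rw [(by omega : t - m + 2 - (t - m) = 2)] at hdvd
        have := Nat.le_of_dvd (by omega) hdvd
        omega

end RDAFAux


/-- The state of a node in the RDAF protocol: message possession `hasMsg`,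
source set `src` and destination set `dst`. -/
structure RDAFState (V : Type*) where
  hasMsg : Prop
  src : Set V
  dst : Set V

namespace RDAF

variable {V : Type*}

/-- Initial configuration: the source has the message and destination set `N(g0)`. -/
noncomputable def init (G : SimpleGraph V) (g0 : V) : V → RDAFState V := fun u =>
  if u = g0 then ⟨True, ∅, G.neighborSet g0⟩ else ⟨False, ∅, ∅⟩

/-- One round of state evolution: from the states at round `j` to the states at round `j+1`,
under delay function `d` (where `d j v e = true` means transmission from `v` along `e` is
blocked in round `j`). -/
noncomputable def step (G : SimpleGraph V) (d : ℕ → V → Sym2 V → Bool) (j : ℕ)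
    (st : V → RDAFState V) : V → RDAFState V := fun u =>
  let s' : Set V :=
    {v | G.Adj v u ∧ (st v).hasMsg ∧ u ∈ (st v).dst ∧ d (j + 1) v s(v, u) = false}
  let t' : Set V :=
    if s'.Nonempty then G.neighborSet u \ s'
    else if (st u).hasMsg then {v | v ∈ (st u).dst ∧ d (j + 1) u s(u, v) = true}
    else ∅
  ⟨s'.Nonempty ∨ t'.Nonempty, s', t'⟩

/-- The state `S(j, u)` of every node `u` at round `j`. -/
noncomputable def stateAt (G : SimpleGraph V) (g0 : V) (d : ℕ → V → Sym2 V → Bool) :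
    ℕ → V → RDAFState V
  | 0 => init G g0
  | j + 1 => step G d j (stateAt G g0 d j)

/-- `M j u`: node `u` possesses the message at round `j`. -/
noncomputable def M (G : SimpleGraph V) (g0 : V) (d : ℕ → V → Sym2 V → Bool) (j : ℕ)
    (u : V) : Prop :=
  (stateAt G g0 d j u).hasMsg

/-- `srcSet j u = s(j, u)`: the source set of node `u` at round `j`. -/
noncomputable def srcSet (G : SimpleGraph V) (g0 : V) (d : ℕ → V → Sym2 V → Bool) (j : ℕ)
    (u : V) : Set V :=
  (stateAt G g0 d j u).src

/-- `destSet j u = dest(j, u)`: the destination set of node `u` at round `j`. -/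
noncomputable def destSet (G : SimpleGraph V) (g0 : V) (d : ℕ → V → Sym2 V → Bool) (j : ℕ)
    (u : V) : Set V :=
  (stateAt G g0 d j u).dst

/-- The transmission set `r(j)`: pairs `(v, {v,w})` such that `v` transmits to `w` in round `j`. -/
noncomputable def trans (G : SimpleGraph V) (g0 : V) (d : ℕ → V → Sym2 V → Bool) :
    ℕ → Set (V × Sym2 V)
  | 0 => ∅
  | j + 1 =>
    {p | ∃ v w : V, p = (v, s(v, w)) ∧ G.Adj v w ∧ M G g0 d j v ∧
      w ∈ destSet G g0 d j v ∧ d (j + 1) v s(v, w) = false}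

/-- The configuration `σ(j) = (S(j, ·), r(j))` at round `j`. -/
noncomputable def config (G : SimpleGraph V) (g0 : V) (d : ℕ → V → Sym2 V → Bool) (j : ℕ) :
    (V → RDAFState V) × Set (V × Sym2 V) :=
  (stateAt G g0 d j, trans G g0 d j)

/-- The finite delay property: every node-edge pair is allowed to transmit infinitely often. -/
def FiniteDelay (G : SimpleGraph V) (d : ℕ → V → Sym2 V → Bool) : Prop :=
  ∀ v : V, ∀ e ∈ G.edgeSet, v ∈ e → ∀ j : ℕ, ∃ j' ≥ j, d j' v e = false

/-- Flooding has terminated by round `t`: no node has the message at round `t`. -/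
def TerminatedBy (G : SimpleGraph V) (g0 : V) (d : ℕ → V → Sym2 V → Bool) (t : ℕ) : Prop :=
  ∀ v : V, ¬ M G g0 d t v

/-- Flooding terminates: it has terminated by some round. -/
def Terminates (G : SimpleGraph V) (g0 : V) (d : ℕ → V → Sym2 V → Bool) : Prop :=
  ∃ t : ℕ, TerminatedBy G g0 d t

/-- A schedule is periodic infinite with parameters `(c, l)`. -/
def PeriodicInfinite (G : SimpleGraph V) (g0 : V) (d : ℕ → V → Sym2 V → Bool)
    (c l : ℕ) : Prop :=
  1 ≤ l ∧ (∀ j : ℕ, c ≤ j → config G g0 d j = config G g0 d (j + l)) ∧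
    ∃ k < l, (trans G g0 d (c + k)).Nonempty

end RDAF

/-- **Cyclic non-termination (Theorem 1).** For every finite connected simple graph containing
a cycle and every source node, there is a delay function satisfying the finite delay property
under which flooding does not terminate. -/
theorem RDAF.cyclic_non_termination
    {V : Type*} [Fintype V] (G : SimpleGraph V) (hconn : G.Connected)
    (hcyc : ¬ G.IsAcyclic) (g0 : V) :
    ∃ d : ℕ → V → Sym2 V → Bool, RDAF.FiniteDelay G d ∧
      ∀ t : ℕ, ∃ u : V, RDAF.M G g0 d t u := by

  obtain ⟨w, hw0, hadj, hne2⟩ := RDAFAux.exists_seq G hconn hcyc g0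
  set d : ℕ → V → Sym2 V → Bool :=
    fun j v e => if v = w (j + 1) ∧ e = s(w (j + 1), w j) then true else false with hddef
  have hdF : ∀ j (v : V) (e : Sym2 V), v ≠ w (j + 1) → d j v e = false := by
    intro j v e h
    show (if v = w (j + 1) ∧ e = s(w (j + 1), w j) then true else false) = false
    rw [if_neg (fun hh => h hh.1)]
  have hdT : ∀ j, d j (w (j + 1)) s(w (j + 1), w j) = true := by
    intro j
    show (if _ ∧ _ then true else false) = true
    rw [if_pos ⟨rfl, rfl⟩]
  have key : ∀ t, (RDAF.stateAt G g0 d t (w t)).hasMsg ∧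
      w (t + 1) ∈ (RDAF.stateAt G g0 d t (w t)).dst := by
    intro t
    induction t with
    | zero =>
      constructor
      · show (RDAF.init G g0 (w 0)).hasMsg
        rw [hw0]
        simp [RDAF.init]
      · show w 1 ∈ (RDAF.init G g0 (w 0)).dst
        rw [hw0]
        simp only [RDAF.init, if_pos rfl]
        exact hw0 ▸ (hadj 0)
    | succ t ih =>
      have hmem : w t ∈ {v | G.Adj v (w (t + 1)) ∧ (RDAF.stateAt G g0 d t v).hasMsg ∧
          w (t + 1) ∈ (RDAF.stateAt G g0 d t v).dst ∧ d (t + 1) v s(v, w (t + 1)) = false} :=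
        ⟨hadj t, ih.1, ih.2, hdF (t + 1) (w t) _ (hne2 t)⟩
      have hS : Set.Nonempty {v | G.Adj v (w (t + 1)) ∧ (RDAF.stateAt G g0 d t v).hasMsg ∧
          w (t + 1) ∈ (RDAF.stateAt G g0 d t v).dst ∧ d (t + 1) v s(v, w (t + 1)) = false} :=
        ⟨w t, hmem⟩
      constructor
      · exact Or.inl hS
      · show w (t + 2) ∈
          (if Set.Nonempty {v | G.Adj v (w (t + 1)) ∧ (RDAF.stateAt G g0 d t v).hasMsg ∧
              w (t + 1) ∈ (RDAF.stateAt G g0 d t v).dst ∧ d (t + 1) v s(v, w (t + 1)) = false}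
            then G.neighborSet (w (t + 1)) \
              {v | G.Adj v (w (t + 1)) ∧ (RDAF.stateAt G g0 d t v).hasMsg ∧
                w (t + 1) ∈ (RDAF.stateAt G g0 d t v).dst ∧ d (t + 1) v s(v, w (t + 1)) = false}
            else if (RDAF.stateAt G g0 d t (w (t + 1))).hasMsg then
              {v | v ∈ (RDAF.stateAt G g0 d t (w (t + 1))).dst ∧
                d (t + 1) (w (t + 1)) s(w (t + 1), v) = true}
            else ∅)
        rw [if_pos hS]
        refine ⟨hadj (t + 1), ?_⟩
        intro hin
        have h4 := hin.2.2.2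
        rw [hdT (t + 1)] at h4
        exact absurd h4 (by simp)
  refine ⟨d, ?_, fun t => ⟨w t, (key t).1⟩⟩
  intro v e _ _ j
  by_cases h : v = w (j + 1)
  · refine ⟨j + 1, by omega, hdF (j + 1) v e ?_⟩
    intro hh
    exact (hadj (j + 1)).ne (h ▸ hh ▸ rfl)
  · exact ⟨j, le_rfl, hdF j v e h⟩
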